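/- In the normal game with target SOS = [S,O,S] on the 1×n board, consider any position (a board together with the player to move) whose board does not achieve SOS but contains a losing pair, i.e., there is an index i with b i = some S, b (i+1) = none, b (i+2) = none, and b (i+3) = some S. Then the game from this position is not a draw: either the player to move can force a win or the other player can force a win. -/

import Mathlib

/-- The two letters of the SOS game. -/
inductive Letter : Type
  | S : Letter
  | O : Letter
  deriving DecidableEq

open Letter

/-- The target string `t` occurs left-to-right as a consecutive block on the
linear board `b`. -/
def Achieves {n : ℕ} (t : List Letter) (b : Fin n → Option Letter) : Prop :=
  ∃ i : ℕ, ∀ j : ℕ, (hj : j < t.length) → ∃ h : i + j < n,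
    b ⟨i + j, h⟩ = some (t.get ⟨j, hj⟩)

/-- `Force Win m w b`: the player to move in position `b` (with `m` remaining moves,
i.e. `m` empty cells) can force a win when `w = true`, resp. can force at least a
draw when `w = false`, in the normal game whose winning boards are given by `Win`
(a player wins if the board satisfies `Win` immediately after their move). -/
def Force {α : Type} [DecidableEq α] (Win : (α → Option Letter) → Prop) :
    ℕ → Bool → (α → Option Letter) → Prop
  | 0, w, _ => w = false
  | m + 1, w, b => ∃ i : α, ∃ x : Letter, b i = none ∧
      (Win (Function.update b i (some x)) ∨
        ¬ Force Win m (!w) (Function.update b i (some x)))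

/-- number of empty cells -/
def EC {n : ℕ} (b : Fin n → Option Letter) : ℕ :=
  (Finset.univ.filter fun j : Fin n => b j = none).card

lemma EC_update {n : ℕ} (b : Fin n → Option Letter) (i : Fin n) (x : Letter)
    (h : b i = none) : EC b = EC (Function.update b i (some x)) + 1 := by
  unfold EC
  have hset : (Finset.univ.filter fun j : Fin n => Function.update b i (some x) j = none)
      = (Finset.univ.filter fun j : Fin n => b j = none).erase i := by
    ext j
    rcases eq_or_ne j i with rfl | hne
    · simp [Function.update_self]
    · simp [Function.update_of_ne hne, hne]
  rw [hset, Finset.card_erase_of_mem (by simp [h])]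
  have : 0 < (Finset.univ.filter fun j : Fin n => b j = none).card :=
    Finset.card_pos.mpr ⟨i, by simp [h]⟩
  omega

lemma EC_pos {n : ℕ} (b : Fin n → Option Letter) (i : Fin n) (h : b i = none) :
    0 < EC b := Finset.card_pos.mpr ⟨i, by simp [h]⟩

lemma achieves_of {n : ℕ} (b : Fin n → Option Letter) (p : ℕ) (h : p + 2 < n)
    (h0 : b ⟨p, by omega⟩ = some S) (h1 : b ⟨p + 1, by omega⟩ = some O)
    (h2 : b ⟨p + 2, h⟩ = some S) : Achieves [S, O, S] b := by
  refine ⟨p, ?_⟩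
  intro j hj
  simp only [List.length_cons, List.length_nil] at hj
  interval_cases j
  · exact ⟨by omega, h0⟩
  · exact ⟨by omega, h1⟩
  · exact ⟨by omega, h2⟩

lemma key (m : ℕ) : ∀ {n : ℕ} (b : Fin n → Option Letter),
    ¬ Achieves [S, O, S] b →
    (∃ p : ℕ, ∃ h : p + 3 < n,
      b ⟨p, by linarith⟩ = some S ∧ b ⟨p + 1, by linarith⟩ = none ∧
        b ⟨p + 2, by linarith⟩ = none ∧ b ⟨p + 3, h⟩ = some S) →
    m = EC b →
    Force (Achieves [S, O, S]) m false b → Force (Achieves [S, O, S]) m true b := by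
  induction m using Nat.strong_induction_on with
  | _ m IH =>
    intro n b hb hpair hm hf
    obtain ⟨p, hp, hb0, hb1, hb2, hb3⟩ := hpair
    obtain ⟨m', rfl⟩ : ∃ m', m = m' + 1 := by
      have := EC_pos b ⟨p + 1, by omega⟩ hb1
      exact ⟨m - 1, by omega⟩
    obtain ⟨i, x, hi, hcase⟩ := hf
    set b' := Function.update b i (some x) with hb'
    clear_value b'
    by_cases hwin : Achieves [S, O, S] b'
    · exact ⟨i, x, hi, Or.inl (hb' ▸ hwin)⟩
    have hnf : ¬ Force (Achieves [S, O, S]) m' true b' := by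
      rcases hcase with h | h
      · exact absurd h hwin
      · exact hb' ▸ h
    have hm' : m' = EC b' := by
      have h := EC_update b i x hi
      rw [← hb'] at h
      omega
    by_cases hin : i.val = p + 1 ∨ i.val = p + 2
    · -- mover played inside the pair; opponent wins immediately, contradiction
      exfalso
      apply hnf
      obtain ⟨m'', rfl⟩ : ∃ m'', m' = m'' + 1 := by
        rcases hin with h1 | h2
        · have hj : b' ⟨p + 2, by omega⟩ = none := by
            rw [hb', Function.update_of_ne (Fin.ne_of_val_ne (by simp only [Fin.val_mk]; omega))]; exact hb2
          have := EC_pos b' _ hj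
          exact ⟨m' - 1, by omega⟩
        · have hj : b' ⟨p + 1, by omega⟩ = none := by
            rw [hb', Function.update_of_ne (Fin.ne_of_val_ne (by simp only [Fin.val_mk]; omega))]; exact hb1
          have := EC_pos b' _ hj
          exact ⟨m' - 1, by omega⟩
      rcases hin with h1 | h2
      · -- i = p+1
        have hieq : i = ⟨p + 1, by omega⟩ := Fin.ext h1
        rw [hieq] at hb'
        cases x with
        | S =>
          refine ⟨⟨p + 2, by omega⟩, O, ?_, Or.inl ?_⟩
          · rw [hb', Function.update_of_ne (Fin.ne_of_val_ne (by simp only [Fin.val_mk]; omega))]; exact hb2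
          · refine achieves_of _ (p + 1) (by omega) ?_ ?_ ?_
            · rw [Function.update_of_ne (Fin.ne_of_val_ne (by simp only [Fin.val_mk]; omega)), hb',
                Function.update_self]
            · exact Function.update_self _ _ _
            · show Function.update b' ⟨p + 2, by omega⟩ (some O) ⟨p + 3, by omega⟩
                  = some S
              rw [Function.update_of_ne (Fin.ne_of_val_ne (by simp only [Fin.val_mk]; omega)), hb',
                Function.update_of_ne (Fin.ne_of_val_ne (by simp only [Fin.val_mk]; omega))]
              exact hb3
        | O =>
          refine ⟨⟨p + 2, by omega⟩, S, ?_, Or.inl ?_⟩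
          · rw [hb', Function.update_of_ne (Fin.ne_of_val_ne (by simp only [Fin.val_mk]; omega))]; exact hb2
          · refine achieves_of _ p (by omega) ?_ ?_ ?_
            · rw [Function.update_of_ne (Fin.ne_of_val_ne (by simp only [Fin.val_mk]; omega)), hb',
                Function.update_of_ne (Fin.ne_of_val_ne (by simp only [Fin.val_mk]; omega))]
              exact hb0
            · rw [Function.update_of_ne (Fin.ne_of_val_ne (by simp only [Fin.val_mk]; omega)), hb',
                Function.update_self]
            · exact Function.update_self _ _ _
      · -- i = p+2
        have hieq : i = ⟨p + 2, by omega⟩ := Fin.ext h2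
        rw [hieq] at hb'
        cases x with
        | S =>
          refine ⟨⟨p + 1, by omega⟩, O, ?_, Or.inl ?_⟩
          · rw [hb', Function.update_of_ne (Fin.ne_of_val_ne (by simp only [Fin.val_mk]; omega))]; exact hb1
          · refine achieves_of _ p (by omega) ?_ ?_ ?_
            · rw [Function.update_of_ne (Fin.ne_of_val_ne (by simp only [Fin.val_mk]; omega)), hb',
                Function.update_of_ne (Fin.ne_of_val_ne (by simp only [Fin.val_mk]; omega))]
              exact hb0
            · exact Function.update_self _ _ _
            · rw [Function.update_of_ne (Fin.ne_of_val_ne (by simp only [Fin.val_mk]; omega)), hb',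
                Function.update_self]
        | O =>
          refine ⟨⟨p + 1, by omega⟩, S, ?_, Or.inl ?_⟩
          · rw [hb', Function.update_of_ne (Fin.ne_of_val_ne (by simp only [Fin.val_mk]; omega))]; exact hb1
          · refine achieves_of _ (p + 1) (by omega) ?_ ?_ ?_
            · exact Function.update_self _ _ _
            · show Function.update b' ⟨p + 1, by omega⟩ (some S) ⟨p + 2, by omega⟩
                  = some O
              rw [Function.update_of_ne (Fin.ne_of_val_ne (by simp only [Fin.val_mk]; omega)), hb',
                Function.update_self]
            · show Function.update b' ⟨p + 1, by omega⟩ (some S) ⟨p + 3, by omega⟩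
                  = some S
              rw [Function.update_of_ne (Fin.ne_of_val_ne (by simp only [Fin.val_mk]; omega)), hb',
                Function.update_of_ne (Fin.ne_of_val_ne (by simp only [Fin.val_mk]; omega))]
              exact hb3
    · -- mover played outside the pair: pair survives
      push_neg at hin
      have hne0 : i ≠ ⟨p, by omega⟩ := by
        intro h; rw [h, hb0] at hi; exact (Option.some_ne_none _) hi
      have hne3 : i ≠ ⟨p + 3, hp⟩ := by
        intro h; rw [h, hb3] at hi; exact (Option.some_ne_none _) hi
      have hpair' : ∃ q : ℕ, ∃ h : q + 3 < n,
          b' ⟨q, by omega⟩ = some S ∧ b' ⟨q + 1, by omega⟩ = none ∧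
            b' ⟨q + 2, by omega⟩ = none ∧ b' ⟨q + 3, h⟩ = some S := by
        refine ⟨p, hp, ?_, ?_, ?_, ?_⟩
        · rw [hb', Function.update_of_ne (Ne.symm hne0)]; exact hb0
        · rw [hb', Function.update_of_ne (Fin.ne_of_val_ne (by simp only [Fin.val_mk]; omega))]; exact hb1
        · rw [hb', Function.update_of_ne (Fin.ne_of_val_ne (by simp only [Fin.val_mk]; omega))]; exact hb2
        · rw [hb', Function.update_of_ne (Ne.symm hne3)]; exact hb3
      have hkey := IH m' (by omega) b' hwin hpair' hm'
      refine ⟨i, x, hi, Or.inr (fun hff => hnf (hkey (hb' ▸ hff)))⟩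

/-- Consider any position in the normal SOS game on the 1×n board: a board `b`
together with the player to move.  If `b` does not achieve SOS but contains a
losing pair — an index `i` with `b i = S`, `b (i+1) = none`, `b (i+2) = none`,
`b (i+3) = S` — then the game from this position is not a draw: either the
player to move can force a win, or the other player can force a win (i.e. the
player to move cannot force even a draw). -/
theorem losing_pair_not_draw {n : ℕ} (b : Fin n → Option Letter)
    (hb : ¬ Achieves [S, O, S] b)
    (hpair : ∃ i : ℕ, ∃ h : i + 3 < n,
      b ⟨i, by omega⟩ = some S ∧ b ⟨i + 1, by omega⟩ = none ∧
        b ⟨i + 2, by omega⟩ = none ∧ b ⟨i + 3, h⟩ = some S) :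
    Force (Achieves [S, O, S])
        ((Finset.univ.filter fun j : Fin n => b j = none).card) true b ∨
      ¬ Force (Achieves [S, O, S])
        ((Finset.univ.filter fun j : Fin n => b j = none).card) false b := by
  by_cases hd : Force (Achieves [S, O, S])
      ((Finset.univ.filter fun j : Fin n => b j = none).card) false b
  · exact Or.inl (key _ b hb hpair rfl hd)
  · exact Or.inr hd
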